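/- Let U be a supertropical monoid with associated supertropical semiring Û = U/E(U,S(U)) and canonical map σ_U: U → Û. Then σ_U is universal among fiber contractions to semirings: any fiber contraction α: U → V with V a supertropical semiring factors uniquely as α = β∘σ_U with β: Û → V a fiber contraction. -/
import Mathlib


universe u v w

class STM (U : Type u) extends CommMonoid U, Zero U where
  zero_mul' : ∀ x : U, 0 * x = 0
  e : U
  e_idem : e * e = e
  ghost_zero : ∀ x : U, e * x = 0 → x = 0
  le : U → U → Prop
  le_refl : ∀ x : U, le x x
  le_trans : ∀ x y z : U, le x y → le y z → le x z
  le_total : ∀ x y : U, le x y ∨ le y x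
  le_antisymm : ∀ x y : U, e * x = x → e * y = y → le x y → le y x → x = y
  le_e : ∀ x y : U, le x y ↔ le (e * x) (e * y)
  mul_le_mul : ∀ x y z : U, le x y → le (x * z) (y * z)
  zero_le : ∀ x : U, le 0 x

namespace STM

variable {U : Type u} [STM U]

/-- `x` is a ghost element, i.e. `x ∈ eU`. -/
def Ghost (x : U) : Prop := e * x = x

/-- strict inequality for the ordering of the ghost ideal -/
def slt (x y : U) : Prop := le x y ∧ ¬ le y x

open scoped Classical in
/-- the forced addition on a supertropical monoid -/
noncomputable def add (x y : U) : U :=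
  if slt (e * x) (e * y) then y
  else if slt (e * y) (e * x) then x
  else e * x

/-- the supertropical monoid `U` "is" a (supertropical) semiring: the forced
addition is associative and distributive. -/
def IsSemiring (U : Type u) [STM U] : Prop :=
  (∀ x y z : U, add (add x y) z = add x (add y z)) ∧
  (∀ x y z : U, add x y * z = add (x * z) (y * z))

end STM

open STM

/-- A transmission between supertropical monoids. -/
structure IsTransmission {U : Type u} {V : Type v} [STM U] [STM V] (α : U → V) : Prop where
  map_zero : α 0 = 0
  map_one : α 1 = 1
  map_mul : ∀ x y : U, α (x * y) = α x * α y
  map_e : α (STM.e : U) = (STM.e : V)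
  mono : ∀ x y : U, Ghost x → Ghost y → STM.le x y → STM.le (α x) (α y)


/-- The set of tangible NC-products in `U`. -/
def NCset (U : Type u) [STM U] : Set U :=
  {x : U | ¬ Ghost x ∧ ∃ y z y' : U, x = y * z ∧ Ghost y' ∧ slt y' (STM.e * y) ∧
      y' * z = STM.e * y * z}

/-- The ideal `U·S(U) ∪ eU` of `U` generated by the tangible NC-products and the ghosts. -/
def NCideal (U : Type u) [STM U] : Set U :=
  {x : U | Ghost x ∨ ∃ u s : U, s ∈ NCset U ∧ x = u * s}

/-- The TE-relation `E(U, U·S(U) ∪ eU)` identifying each element of the ideal with its ghost. -/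
def NCrel (U : Type u) [STM U] : U → U → Prop := fun x y =>
  x = y ∨ (x ∈ NCideal U ∧ y ∈ NCideal U ∧ STM.e * x = STM.e * y)

/-- A fiber contraction: a surjective transmission whose ghost part is an isomorphism. -/
def IsFiberContraction {U : Type u} {V : Type v} [STM U] [STM V] (α : U → V) : Prop :=
  IsTransmission α ∧ Function.Surjective α ∧
  ∀ x y : U, Ghost x → Ghost y → α x = α y → x = y

section Aux

variable {U : Type u} {V : Type w} [STM U] [STM V]

lemma slt_irrefl' (x : V) : ¬ slt x x := fun h => h.2 (STM.le_refl x)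

lemma ghost_mul_e' (x : V) : Ghost (STM.e * x) := by
  show STM.e * (STM.e * x) = STM.e * x
  rw [← mul_assoc, STM.e_idem]

lemma ghost_mul_right {x : V} (hx : Ghost x) (y : V) : Ghost (y * x) := by
  show STM.e * (y * x) = y * x
  rw [mul_left_comm, show STM.e * x = x from hx]

/-- Key lemma: in a supertropical semiring, an NC-relation forces the product to be ghost. -/
lemma semiring_key (hV : IsSemiring V) (a b a' : V)
    (hg : Ghost a') (hlt : slt a' (STM.e * a)) (heq : a' * b = STM.e * a * b) :
    Ghost (a * b) := by
  classical
  have hga' : STM.e * a' = a' := hg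
  have h1 : add a' a = a := by
    unfold add
    rw [hga', if_pos hlt]
  have h2 := hV.2 a' a b
  rw [h1, heq] at h2
  have e1 : STM.e * (STM.e * a * b) = STM.e * a * b := by
    rw [← mul_assoc, ← mul_assoc, STM.e_idem]
  have e2 : STM.e * (a * b) = STM.e * a * b := (mul_assoc _ _ _).symm
  unfold add at h2
  rw [e1, e2, if_neg (slt_irrefl' _), if_neg (slt_irrefl' _)] at h2
  show STM.e * (a * b) = a * b
  rw [e2, ← h2]

lemma transmission_ghost {α : U → V} (hα : IsTransmission α) {x : U} (hx : Ghost x) :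
    Ghost (α x) := by
  show STM.e * α x = α x
  rw [← hα.map_e, ← hα.map_mul, show STM.e * x = x from hx]

/-- A fiber contraction to a semiring maps the NC-ideal into the ghost ideal. -/
lemma ideal_ghost {α : U → V} (hα : IsFiberContraction α) (hV : IsSemiring V)
    {x : U} (hx : x ∈ NCideal U) : Ghost (α x) := by
  obtain ⟨ht, hs⟩ := hα
  obtain ⟨hsurj, hinj⟩ := hs
  rcases hx with hg | ⟨u, s, ⟨_, y, z, y', hs1, hgy', hlt, heq⟩, rfl⟩
  · exact transmission_ghost ht hg
  subst hs1
  rw [ht.map_mul, ht.map_mul]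
  refine ghost_mul_right ?_ (α u)
  refine semiring_key hV (α y) (α z) (α y') (transmission_ghost ht hgy') ?_ ?_
  · constructor
    · have := ht.mono y' (STM.e * y) hgy' (ghost_mul_e' y) hlt.1
      rwa [ht.map_mul, ht.map_e] at this
    · intro hle
      have hle' : STM.le (α (STM.e * y)) (α y') := by
        rwa [ht.map_mul, ht.map_e]
      have hle2 : STM.le (α y') (α (STM.e * y)) := ht.mono _ _ hgy' (ghost_mul_e' y) hlt.1
      have hgey : Ghost (α (STM.e * y)) := transmission_ghost ht (ghost_mul_e' y)
      have hgy'' : Ghost (α y') := transmission_ghost ht hgy'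
      have := STM.le_antisymm _ _ hgy'' hgey hle2 hle'
      have heq2 : y' = STM.e * y := hinj y' (STM.e * y) hgy' (ghost_mul_e' y) this
      exact hlt.2 (heq2 ▸ STM.le_refl y')
  · rw [← ht.map_mul, heq, ht.map_mul, ht.map_mul, ht.map_e]

/-- A fiber contraction to a semiring respects the NC-relation. -/
lemma respects_NCrel {α : U → V} (hα : IsFiberContraction α) (hV : IsSemiring V)
    {x y : U} (h : NCrel U x y) : α x = α y := by
  rcases h with rfl | ⟨hx, hy, he⟩
  · rfl
  have hgx := ideal_ghost hα hV hx
  have hgy := ideal_ghost hα hV hy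
  have : α (STM.e * x) = α (STM.e * y) := by rw [he]
  rw [hα.1.map_mul, hα.1.map_e, hα.1.map_mul, hα.1.map_e] at this
  rw [← show STM.e * α x = α x from hgx, ← show STM.e * α y = α y from hgy, this]

end Aux

/-- Universal property of `σ_U : U → Û`: every fiber contraction `α : U → V` to a
supertropical semiring factors uniquely through `σ_U` by a fiber contraction. -/
theorem associated_semiring_universal {U : Type u} {Uh : Type v} [STM U] [STM Uh]
    (σ : U → Uh) (hσ : IsTransmission σ) (hsurjσ : Function.Surjective σ)
    (hker : ∀ x y : U, σ x = σ y ↔ NCrel U x y) :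
    ∀ (V : Type w) [STM V] (α : U → V), IsFiberContraction α → IsSemiring V →
      ∃! β : Uh → V, IsFiberContraction β ∧ ∀ x : U, β (σ x) = α x := by
  intro V _ α hα hV
  classical
  set β : Uh → V := fun v => α (Classical.choose (hsurjσ v)) with hβ
  have hspec : ∀ v : Uh, σ (Classical.choose (hsurjσ v)) = v := fun v =>
    Classical.choose_spec (hsurjσ v)
  have hcomp : ∀ x : U, β (σ x) = α x := by
    intro x
    apply respects_NCrel hα hV
    exact (hker _ _).mp (hspec (σ x))
  -- ghost preimages
  have hghostpre : ∀ a : Uh, Ghost a → ∃ x : U, Ghost x ∧ σ x = a := by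
    intro a ha
    obtain ⟨x, rfl⟩ := hsurjσ a
    refine ⟨STM.e * x, ghost_mul_e' x, ?_⟩
    rw [hσ.map_mul, hσ.map_e]
    exact ha
  have hσinj : ∀ x y : U, Ghost x → Ghost y → σ x = σ y → x = y := by
    intro x y hx hy h
    rcases (hker _ _).mp h with rfl | ⟨_, _, he⟩
    · rfl
    · rw [← show STM.e * x = x from hx, ← show STM.e * y = y from hy, he]
  refine ⟨β, ⟨⟨⟨?_, ?_, ?_, ?_, ?_⟩, ?_, ?_⟩, hcomp⟩, ?_⟩
  · rw [← hσ.map_zero, hcomp, hα.1.map_zero]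
  · rw [← hσ.map_one, hcomp, hα.1.map_one]
  · intro a b
    obtain ⟨x, rfl⟩ := hsurjσ a
    obtain ⟨y, rfl⟩ := hsurjσ b
    rw [← hσ.map_mul, hcomp, hcomp, hcomp, hα.1.map_mul]
  · rw [← hσ.map_e, hcomp, hα.1.map_e]
  · -- mono
    intro a b ha hb hle
    obtain ⟨x, hgx, rfl⟩ := hghostpre a ha
    obtain ⟨y, hgy, rfl⟩ := hghostpre b hb
    rw [hcomp, hcomp]
    rcases STM.le_total x y with h | h
    · exact hα.1.mono _ _ hgx hgy h
    · have : σ x = σ y := STM.le_antisymm _ _ ha hb hle (hσ.mono _ _ hgy hgx h)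
      have := hσinj _ _ hgx hgy this
      subst this
      exact STM.le_refl _
  · -- surjective
    intro v
    obtain ⟨x, rfl⟩ := hα.2.1 v
    exact ⟨σ x, hcomp x⟩
  · -- injective on ghosts
    intro a b ha hb h
    obtain ⟨x, hgx, rfl⟩ := hghostpre a ha
    obtain ⟨y, hgy, rfl⟩ := hghostpre b hb
    rw [hcomp, hcomp] at h
    rw [hα.2.2 x y hgx hgy h]
  · -- uniqueness
    intro β' ⟨_, hcomp'⟩
    funext v
    obtain ⟨x, rfl⟩ := hsurjσ v
    rw [hcomp', hcomp]
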